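/- Moment recursion under modular duality for the discrete Gaussian θ₃-distribution: for c > 0 define the normalized even moments μ_{2j}(c) = ( ∑_{n∈ℤ} n^{2j} e^{-cπn²} ) / ( ∑_{n∈ℤ} e^{-cπn²} ) for nonnegative integers j (with μ₀(c) = 1). Then for every c > 0 and every integer m ≥ 1: c^{2m} · μ_{2m}(c) - (-1)^m · μ_{2m}(1/c) = ∑_{l=1}^{m} ( (2m)! / ( l! · (2m-2l)! ) ) · (-1)^{m-l} · (c/(4π))^l · μ_{2m-2l}(1/c). -/

import Mathlib

open Real

noncomputable def dgSum (j : ℕ) (c : ℝ) : ℝ :=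
  ∑' n : ℤ, (n : ℝ) ^ (2 * j) * Real.exp (-c * π * (n : ℝ) ^ 2)

lemma natAbs_cast_sq (n : ℤ) : ((n.natAbs : ℝ)) ^ 2 = (n : ℝ) ^ 2 := by
  rw [← sq_abs (n : ℝ)]
  congr 1
  rw [Nat.cast_natAbs]
  push_cast
  rfl

lemma dg_summable {c : ℝ} (hc : 0 < c) (j : ℕ) :
    Summable (fun n : ℤ => (n : ℝ) ^ (2 * j) * Real.exp (-c * π * (n : ℝ) ^ 2)) := by
  have hr : Real.exp (-(c * π)) < 1 := by
    rw [Real.exp_lt_one_iff]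
    have : 0 < c * π := by positivity
    linarith
  have hnat : Summable (fun n : ℕ => (n : ℝ) ^ (2 * j) * Real.exp (-(c * π)) ^ n) := by
    apply summable_pow_mul_geometric_of_norm_lt_one
    rw [Real.norm_eq_abs, abs_of_pos (Real.exp_pos _)]
    exact hr
  have hintsum : Summable (fun n : ℤ =>
      ((n.natAbs : ℝ)) ^ (2 * j) * Real.exp (-(c * π)) ^ n.natAbs) := by
    apply Summable.of_nat_of_neg <;> simpa using hnat
  apply Summable.of_nonneg_of_le _ _ hintsum
  · intro n
    have : (0:ℝ) ≤ (n:ℝ) ^ (2*j) := by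
      rw [pow_mul]; positivity
    positivity
  · intro n
    rw [← Real.exp_nat_mul]
    have h1 : ((n : ℝ)) ^ (2 * j) = ((n.natAbs : ℝ)) ^ (2 * j) := by
      rw [pow_mul, pow_mul, natAbs_cast_sq]
    rw [h1]
    apply mul_le_mul_of_nonneg_left _ (by positivity)
    apply Real.exp_le_exp.mpr
    have h2 : (n.natAbs : ℝ) ≤ (n : ℝ) ^ 2 := by
      rw [← natAbs_cast_sq]
      have := Nat.le_self_pow (two_ne_zero) n.natAbs
      exact_mod_cast this
    nlinarith [mul_le_mul_of_nonneg_left h2 (mul_pos hc Real.pi_pos).le]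

lemma dgSum_pos {c : ℝ} (hc : 0 < c) : 0 < dgSum 0 c := by
  have hs := dg_summable hc 0
  apply Summable.tsum_pos hs _ (0 : ℤ)
  · simp
  · intro n
    have : (0:ℝ) ≤ (n:ℝ) ^ (2*0) := by rw [pow_mul]; positivity
    positivity

lemma dgSum_jacobi {c : ℝ} (hc : 0 < c) : dgSum 0 (1/c) = Real.sqrt c * dgSum 0 c := by
  have h := Real.tsum_exp_neg_mul_int_sq hc
  have e1 : dgSum 0 c = ∑' n : ℤ, Real.exp (-π * c * (n:ℝ)^2) := by
    unfold dgSum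
    apply tsum_congr; intro n; rw [pow_zero, one_mul]; ring_nf
  have e2 : dgSum 0 (1/c) = ∑' n : ℤ, Real.exp (-π / c * (n:ℝ)^2) := by
    unfold dgSum
    apply tsum_congr; intro n; rw [pow_zero, one_mul]; ring_nf
  rw [e1, e2] at *
  rw [h, Real.sqrt_eq_rpow]
  have hcrpow : (0:ℝ) < c ^ ((1:ℝ)/2) := Real.rpow_pos_of_pos hc _
  field_simp

lemma dg_hasDerivAt (j : ℕ) {c : ℝ} (hc : 0 < c) :
    HasDerivAt (dgSum j) (-π * dgSum (j+1) c) c := by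
  have hmem : c ∈ Set.Ioi (c/2) := by simpa using half_lt_self hc
  have key : HasDerivAt (fun z => ∑' n : ℤ, (n : ℝ) ^ (2 * j) * Real.exp (-z * π * (n : ℝ) ^ 2))
      (∑' n : ℤ, (-π) * ((n : ℝ) ^ (2 * (j+1)) * Real.exp (-c * π * (n : ℝ) ^ 2))) c := by
    refine hasDerivAt_tsum_of_isPreconnected
      (u := fun n : ℤ => π * ((n : ℝ) ^ (2 * (j+1)) * Real.exp (-(c/2) * π * (n : ℝ) ^ 2)))
      (g' := fun (n : ℤ) (y : ℝ) => (-π) * ((n : ℝ) ^ (2 * (j+1)) * Real.exp (-y * π * (n : ℝ) ^ 2)))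
      ((dg_summable (half_pos hc) (j+1)).mul_left π)
      isOpen_Ioi isPreconnected_Ioi (fun n y _ => ?_) (fun n y hy => ?_) hmem
      (dg_summable hc j) hmem
    · have h1 : HasDerivAt (fun y : ℝ => -y * π * (n:ℝ)^2) (-1 * π * (n:ℝ)^2) y :=
        ((hasDerivAt_id y).neg.mul_const π).mul_const ((n:ℝ)^2)
      have h2 := (h1.exp).const_mul ((n:ℝ)^(2*j))
      refine h2.congr_deriv ?_
      ring
    · rw [Real.norm_eq_abs, abs_mul, abs_neg, abs_of_pos Real.pi_pos, abs_mul]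
      have hp : |(n:ℝ)^(2*(j+1))| = (n:ℝ)^(2*(j+1)) := by
        apply abs_of_nonneg; rw [pow_mul]; positivity
      rw [hp, abs_of_pos (Real.exp_pos _)]
      apply mul_le_mul_of_nonneg_left _ Real.pi_pos.le
      apply mul_le_mul_of_nonneg_left _ (by rw [pow_mul]; positivity : (0:ℝ) ≤ (n:ℝ)^(2*(j+1)))
      apply Real.exp_le_exp.mpr
      have hy' : c/2 ≤ y := le_of_lt hy
      nlinarith [mul_le_mul_of_nonneg_right hy' (mul_nonneg Real.pi_pos.le (sq_nonneg ((n:ℝ))))]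
  rw [tsum_mul_left] at key
  exact key

/-- The coefficient `(2m)! / (l! (2m-2l)!)` for `l ≤ m`, and `0` otherwise. -/
noncomputable def dgCoef (m l : ℕ) : ℝ :=
  if l ≤ m then (Nat.factorial (2*m) : ℝ) / ((Nat.factorial l : ℝ) * (Nat.factorial (2*m - 2*l) : ℝ))
  else 0

lemma dgCoef_zero (m : ℕ) : dgCoef m 0 = 1 := by
  simp [dgCoef, Nat.factorial_ne_zero, div_self, Nat.cast_ne_zero]

lemma dgCoef_rec (m l : ℕ) :
    dgCoef (m+1) (l+1) = dgCoef m (l+1) + (8*(m:ℝ) + 2 - 4*l) * dgCoef m l := by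
  rcases le_or_gt (l+1) m with hlm | hlm
  · -- l + 1 ≤ m
    obtain ⟨k, hk⟩ : ∃ k, m = l + 1 + k := le_iff_exists_add.mp hlm
    subst hk
    simp only [dgCoef, if_pos (by omega : l + 1 ≤ l + 1 + k + 1),
      if_pos (by omega : l + 1 ≤ l + 1 + k), if_pos (by omega : l ≤ l + 1 + k)]
    have e1 : 2*(l+1+k+1) = (2*(l+1+k)) + 1 + 1 := by omega
    have e2 : 2*(l+1+k+1) - 2*(l+1) = (2*k) + 1 + 1 := by omega
    have e3 : 2*(l+1+k) - 2*(l+1) = 2*k := by omega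
    have e4 : 2*(l+1+k) - 2*l = (2*k) + 1 + 1 := by omega
    rw [e2, e3, e4, e1, Nat.factorial_succ ((2*(l+1+k))+1), Nat.factorial_succ (2*(l+1+k)),
      Nat.factorial_succ ((2*k)+1), Nat.factorial_succ (2*k), Nat.factorial_succ l]
    push_cast
    have h1 : (Nat.factorial (2*(l+1+k)) : ℝ) ≠ 0 := Nat.cast_ne_zero.mpr (Nat.factorial_ne_zero _)
    have h2 : (Nat.factorial (2*k) : ℝ) ≠ 0 := Nat.cast_ne_zero.mpr (Nat.factorial_ne_zero _)
    have h3 : (Nat.factorial l : ℝ) ≠ 0 := Nat.cast_ne_zero.mpr (Nat.factorial_ne_zero _)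
    field_simp
    ring
  · rcases le_or_gt l m with hl | hl
    · -- l = m, so l+1 = m+1
      have : l = m := by omega
      subst this
      simp only [dgCoef, if_pos (le_refl _), if_neg (by omega : ¬ l + 1 ≤ l), if_pos (le_refl l)]
      have e1 : 2*(l+1) = (2*l) + 1 + 1 := by omega
      have e2 : 2*(l+1) - 2*(l+1) = 0 := by omega
      have e3 : 2*l - 2*l = 0 := by omega
      rw [e2, e3, e1, Nat.factorial_succ ((2*l)+1), Nat.factorial_succ (2*l),
        Nat.factorial_succ l]
      push_cast
      have h1 : (Nat.factorial (2*l) : ℝ) ≠ 0 := Nat.cast_ne_zero.mpr (Nat.factorial_ne_zero _)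
      have h3 : (Nat.factorial l : ℝ) ≠ 0 := Nat.cast_ne_zero.mpr (Nat.factorial_ne_zero _)
      simp only [Nat.factorial_zero]
      field_simp
      ring
    · -- l > m : all terms vanish
      simp only [dgCoef, if_neg (by omega : ¬ l + 1 ≤ m + 1), if_neg (by omega : ¬ l + 1 ≤ m),
        if_neg (by omega : ¬ l ≤ m)]
      ring

lemma neg_one_pow_sub {m l : ℕ} (h : l ≤ m) : ((-1:ℝ))^(m-l) = (-1)^(m+l) := by
  have e : m + l = (m - l) + 2*l := by omega
  rw [e, pow_add, pow_mul]
  norm_num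

lemma dgCoef_top (m : ℕ) : dgCoef m (m+1) = 0 := by
  simp [dgCoef]

lemma sum_step (m : ℕ) (q : ℝ) (h : ℕ → ℝ) :
    ∑ l ∈ Finset.range (m+2), dgCoef (m+1) l * (-1:ℝ)^(m+1-l) * q^l * h (m+1-l)
    = ∑ l ∈ Finset.range (m+1), dgCoef m l * (-1:ℝ)^(m-l) *
        ((8*(m:ℝ)+2-4*(l:ℝ)) * q^(l+1) * h (m-l) - q^l * h (m+1-l)) := by
  set u : ℕ → ℝ := fun k => (-1:ℝ)^m * (-1)^k * dgCoef m k * q^k * h (m+1-k) with hu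
  rw [Finset.sum_range_succ']
  have key : ∀ k ∈ Finset.range (m+1),
      dgCoef (m+1) (k+1) * (-1:ℝ)^(m+1-(k+1)) * q^(k+1) * h (m+1-(k+1))
      = dgCoef m k * (-1:ℝ)^(m-k) *
          ((8*(m:ℝ)+2-4*(k:ℝ)) * q^(k+1) * h (m-k) - q^k * h (m+1-k))
        + (u k - u (k+1)) := by
    intro k hk
    have hkm : k ≤ m := by simpa [Nat.lt_succ_iff] using hk
    rw [dgCoef_rec]
    simp only [hu, Nat.succ_sub_succ]
    rw [neg_one_pow_sub (by omega : k ≤ m), pow_add]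
    ring
  rw [Finset.sum_congr rfl key, Finset.sum_add_distrib, Finset.sum_range_sub' u]
  have hum : u (m+1) = 0 := by
    simp only [hu, dgCoef_top]
    ring
  have hu0 : u 0 = (-1:ℝ)^m * h (m+1) := by
    simp [hu, dgCoef_zero]
  have hA0 : dgCoef (m+1) 0 * (-1:ℝ)^(m+1-0) * q^0 * h (m+1-0) = -((-1:ℝ)^m * h (m+1)) := by
    rw [dgCoef_zero]
    simp [pow_succ]
  rw [hum, hu0, hA0]
  ring

lemma cast_mul_pow_pred (l : ℕ) (x : ℝ) : (l:ℝ) * x^(l-1) * x = (l:ℝ) * x^l := by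
  cases l with
  | zero => simp
  | succ k => rw [Nat.add_sub_cancel, pow_succ]; ring

lemma dg_main (m : ℕ) : ∀ s : ℝ, 0 < s →
    s^(4*m+1) * dgSum m (s^2)
    = ∑ l ∈ Finset.range (m+1),
        dgCoef m l * (-1:ℝ)^(m-l) * (s^2/(4*π))^l * dgSum (m-l) (1/s^2) := by
  induction m with
  | zero =>
    intro s hs
    have h := dgSum_jacobi (show (0:ℝ) < s^2 by positivity)
    simp only [Finset.range_one, Finset.sum_singleton, Nat.sub_zero, pow_zero, Nat.zero_eq,
      Nat.mul_zero, Nat.zero_add, pow_one, dgCoef_zero]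
    rw [show (1:ℝ)/s^2 = 1/(s^2) from rfl] at *
    rw [h, Real.sqrt_sq hs.le]
    ring
  | succ m ih =>
    intro s hs
    have hs2 : (0:ℝ) < s^2 := by positivity
    have hinv2 : (0:ℝ) < 1/s^2 := by positivity
    -- derivative of the left-hand side
    have hcomp : HasDerivAt (fun x : ℝ => dgSum m (x^2))
        (-π * dgSum (m+1) (s^2) * (2*s)) s := by
      have h2 : HasDerivAt (fun x : ℝ => x^2) (2*s) s := by
        simpa using hasDerivAt_pow 2 s
      have := HasDerivAt.comp_of_eq s (dg_hasDerivAt m hs2) h2 rfl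
      simpa [Function.comp_def] using this
    have hL : HasDerivAt (fun x : ℝ => x^(4*m+1) * dgSum m (x^2))
        ((4*(m:ℝ)+1)*s^(4*m) * dgSum m (s^2)
          + s^(4*m+1) * (-π * dgSum (m+1) (s^2) * (2*s))) s := by
      have h1 := (hasDerivAt_pow (4*m+1) s).mul hcomp
      refine h1.congr_deriv ?_
      rw [show 4*m+1-1 = 4*m from by omega]
      push_cast
      ring
    -- derivative of the right-hand side, termwise
    have hinv : HasDerivAt (fun x : ℝ => 1/x^2) (-(2*s)/(s^2)^2) s := by
      have h2 : HasDerivAt (fun x : ℝ => x^2) (2*s) s := by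
        simpa using hasDerivAt_pow 2 s
      simpa [one_div, Pi.inv_def] using h2.inv (ne_of_gt hs2)
    have hterm : ∀ l, HasDerivAt
        (fun x : ℝ => dgCoef m l * (-1:ℝ)^(m-l) * (x^2/(4*π))^l * dgSum (m-l) (1/x^2))
        ((dgCoef m l * (-1:ℝ)^(m-l) * ((l:ℝ) * (s^2/(4*π))^(l-1) * (2*s/(4*π))))
            * dgSum (m-l) (1/s^2)
          + (dgCoef m l * (-1:ℝ)^(m-l) * (s^2/(4*π))^l)
            * (-π * dgSum (m-l+1) (1/s^2) * (-(2*s)/(s^2)^2))) s := by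
      intro l
      have hq : HasDerivAt (fun x : ℝ => (x^2/(4*π))^l)
          ((l:ℝ) * (s^2/(4*π))^(l-1) * (2*s/(4*π))) s := by
        have h2 : HasDerivAt (fun x : ℝ => x^2/(4*π)) (2*s/(4*π)) s := by
          simpa using (hasDerivAt_pow 2 s).div_const (4*π)
        simpa [Pi.pow_def] using h2.pow l
      have hG : HasDerivAt (fun x : ℝ => dgSum (m-l) (1/x^2))
          (-π * dgSum (m-l+1) (1/s^2) * (-(2*s)/(s^2)^2)) s := by
        have := HasDerivAt.comp_of_eq s (dg_hasDerivAt (m-l) hinv2) hinv rfl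
        simpa [Function.comp_def, mul_assoc] using this
      have := (hq.const_mul (dgCoef m l * (-1:ℝ)^(m-l))).mul hG
      exact this
    have hR : HasDerivAt
        (fun x : ℝ => ∑ l ∈ Finset.range (m+1),
          dgCoef m l * (-1:ℝ)^(m-l) * (x^2/(4*π))^l * dgSum (m-l) (1/x^2))
        (∑ l ∈ Finset.range (m+1),
          ((dgCoef m l * (-1:ℝ)^(m-l) * ((l:ℝ) * (s^2/(4*π))^(l-1) * (2*s/(4*π))))
              * dgSum (m-l) (1/s^2)
            + (dgCoef m l * (-1:ℝ)^(m-l) * (s^2/(4*π))^l)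
              * (-π * dgSum (m-l+1) (1/s^2) * (-(2*s)/(s^2)^2)))) s :=
      HasDerivAt.fun_sum (fun l _ => hterm l)
    -- the two functions agree near s, hence derivatives agree
    have heq : (fun x : ℝ => x^(4*m+1) * dgSum m (x^2)) =ᶠ[nhds s]
        (fun x : ℝ => ∑ l ∈ Finset.range (m+1),
          dgCoef m l * (-1:ℝ)^(m-l) * (x^2/(4*π))^l * dgSum (m-l) (1/x^2)) := by
      filter_upwards [isOpen_Ioi.mem_nhds hs] with t ht using ih t ht
    have EqD := (hL.congr_of_eventuallyEq heq.symm).unique hR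
    have hIH := ih s hs
    -- final algebra
    rw [sum_step m (s^2/(4*π)) (fun j => dgSum j (1/s^2))]
    have hpine : (2*π) ≠ 0 := by positivity
    apply mul_left_cancel₀ hpine
    calc (2*π) * (s^(4*(m+1)+1) * dgSum (m+1) (s^2))
        = (4*(m:ℝ)+1) * s^2 * (s^(4*m+1) * dgSum m (s^2))
          - s^3 * ((4*(m:ℝ)+1)*s^(4*m) * dgSum m (s^2)
            + s^(4*m+1) * (-π * dgSum (m+1) (s^2) * (2*s))) := by ring
      _ = (4*(m:ℝ)+1) * s^2 * (∑ l ∈ Finset.range (m+1),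
            dgCoef m l * (-1:ℝ)^(m-l) * (s^2/(4*π))^l * dgSum (m-l) (1/s^2))
          - s^3 * (∑ l ∈ Finset.range (m+1),
            ((dgCoef m l * (-1:ℝ)^(m-l) * ((l:ℝ) * (s^2/(4*π))^(l-1) * (2*s/(4*π))))
                * dgSum (m-l) (1/s^2)
              + (dgCoef m l * (-1:ℝ)^(m-l) * (s^2/(4*π))^l)
                * (-π * dgSum (m-l+1) (1/s^2) * (-(2*s)/(s^2)^2)))) := by
          rw [hIH, EqD]
      _ = (2*π) * ∑ l ∈ Finset.range (m+1),
            dgCoef m l * (-1:ℝ)^(m-l) *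
              ((8*(m:ℝ)+2-4*(l:ℝ)) * (s^2/(4*π))^(l+1) * dgSum (m-l) (1/s^2)
                - (s^2/(4*π))^l * dgSum (m+1-l) (1/s^2)) := by
          rw [Finset.mul_sum, Finset.mul_sum, Finset.mul_sum, ← Finset.sum_sub_distrib]
          apply Finset.sum_congr rfl
          intro l hl
          have hlm : l ≤ m := by simpa [Nat.lt_succ_iff] using hl
          rw [show m - l + 1 = m + 1 - l from by omega]
          have hse : s ≠ 0 := ne_of_gt hs
          have hpe : (π:ℝ) ≠ 0 := Real.pi_ne_zero
          cases l with
          | zero =>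
            simp only [Nat.cast_zero, pow_zero, Nat.sub_zero]
            field_simp
            ring_nf
            field_simp
          | succ k =>
            rw [Nat.add_sub_cancel]
            field_simp
            ring_nf
            field_simp
            ring


/-- The normalized even moments of the discrete Gaussian `θ₃`-distribution with parameter
`c > 0`: `discreteGaussianMoment c j = μ_{2j}(c)`. -/
noncomputable def discreteGaussianMoment (c : ℝ) (j : ℕ) : ℝ :=
  (∑' n : ℤ, (n : ℝ) ^ (2 * j) * Real.exp (-c * π * (n : ℝ) ^ 2)) /
    (∑' n : ℤ, Real.exp (-c * π * (n : ℝ) ^ 2))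

lemma moment_eq (c : ℝ) (j : ℕ) : discreteGaussianMoment c j = dgSum j c / dgSum 0 c := by
  unfold discreteGaussianMoment dgSum
  congr 1
  apply tsum_congr
  intro n
  rw [pow_zero, one_mul]

/-- Moment recursion under modular duality for the discrete Gaussian `θ₃`-distribution. -/
theorem discreteGaussian_moment_duality (c : ℝ) (hc : 0 < c) (m : ℕ) (hm : 1 ≤ m) :
    c ^ (2 * m) * discreteGaussianMoment c m
        - (-1 : ℝ) ^ m * discreteGaussianMoment (1 / c) m
    = ∑ l ∈ Finset.Icc 1 m,
        ((Nat.factorial (2 * m) : ℝ) /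
            ((Nat.factorial l : ℝ) * (Nat.factorial (2 * m - 2 * l) : ℝ))) *
          (-1 : ℝ) ^ (m - l) * (c / (4 * π)) ^ l *
          discreteGaussianMoment (1 / c) (m - l) := by
  have hs : (0:ℝ) < Real.sqrt c := Real.sqrt_pos.mpr hc
  have hmain := dg_main m (Real.sqrt c) hs
  rw [Real.sq_sqrt hc.le] at hmain
  have hpow : (Real.sqrt c)^(4*m+1) = Real.sqrt c * c^(2*m) := by
    rw [show 4*m+1 = 2*(2*m)+1 from by ring, pow_succ, pow_mul, Real.sq_sqrt hc.le]
    ring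
  rw [hpow] at hmain
  -- split off the l = 0 term
  have hsplit : Finset.range (m+1) = insert 0 (Finset.Icc 1 m) := by
    ext x
    simp [Nat.lt_succ_iff]
    omega
  rw [hsplit, Finset.sum_insert (by simp)] at hmain
  rw [dgCoef_zero, Nat.sub_zero, pow_zero] at hmain
  have key2 : Real.sqrt c * c^(2*m) * dgSum m c - (-1:ℝ)^m * dgSum m (1/c)
      = ∑ l ∈ Finset.Icc 1 m,
          dgCoef m l * (-1:ℝ)^(m-l) * (c/(4*π))^l * dgSum (m-l) (1/c) := by
    rw [hmain]; ring
  have hcoef : ∀ l ∈ Finset.Icc 1 m,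
      dgCoef m l * (-1:ℝ)^(m-l) * (c/(4*π))^l * dgSum (m-l) (1/c)
      = ((Nat.factorial (2 * m) : ℝ) /
            ((Nat.factorial l : ℝ) * (Nat.factorial (2 * m - 2 * l) : ℝ))) *
          (-1 : ℝ) ^ (m - l) * (c / (4 * π)) ^ l * dgSum (m-l) (1/c) := by
    intro l hl
    rw [Finset.mem_Icc] at hl
    rw [dgCoef, if_pos hl.2]
  rw [Finset.sum_congr rfl hcoef] at key2
  -- normalize
  have hA0 : dgSum 0 c ≠ 0 := ne_of_gt (dgSum_pos hc)
  have hB0pos : 0 < dgSum 0 (1/c) := dgSum_pos (by positivity)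
  have hB0 : dgSum 0 (1/c) ≠ 0 := ne_of_gt hB0pos
  have hjac : dgSum 0 (1/c) = Real.sqrt c * dgSum 0 c := dgSum_jacobi hc
  simp only [moment_eq]
  calc c ^ (2*m) * (dgSum m c / dgSum 0 c) - (-1:ℝ)^m * (dgSum m (1/c) / dgSum 0 (1/c))
      = (Real.sqrt c * c^(2*m) * dgSum m c - (-1:ℝ)^m * dgSum m (1/c)) / dgSum 0 (1/c) := by
        rw [hjac]
        field_simp
    _ = (∑ l ∈ Finset.Icc 1 m,
          ((Nat.factorial (2 * m) : ℝ) /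
              ((Nat.factorial l : ℝ) * (Nat.factorial (2 * m - 2 * l) : ℝ))) *
            (-1 : ℝ) ^ (m - l) * (c / (4 * π)) ^ l * dgSum (m-l) (1/c)) / dgSum 0 (1/c) := by
        rw [key2]
    _ = ∑ l ∈ Finset.Icc 1 m,
          ((Nat.factorial (2 * m) : ℝ) /
              ((Nat.factorial l : ℝ) * (Nat.factorial (2 * m - 2 * l) : ℝ))) *
            (-1 : ℝ) ^ (m - l) * (c / (4 * π)) ^ l * (dgSum (m-l) (1/c) / dgSum 0 (1/c)) := by
        rw [Finset.sum_div]
        apply Finset.sum_congr rfl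
        intro l _
        rw [mul_div_assoc]
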